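/- Fix x > 0 and w₀ ∈ ℝ. Then solutions diverge at x as γ → ±∞: for every C ∈ ℝ there exists Γ ∈ ℝ such that for all γ ≥ Γ, every solution w with parameters (w₀,γ) satisfies w(x) > C; and for every C ∈ ℝ there exists Γ′ ∈ ℝ such that for all γ ≤ Γ′, every solution w with parameters (w₀,γ) satisfies w(x) < C. -/

import Mathlib

open Set MeasureTheory Filter Topology

/-- `piU U c w = min_{μ ∈ U} (μ·w + c(μ))`, realized as an infimum. -/
noncomputable def piU (U : Set ℝ) (c : ℝ → ℝ) (w : ℝ) : ℝ :=
  sInf ((fun μ => μ * w + c μ) '' U)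

/-- `w` is a continuously differentiable solution on `[0,∞)` of
`(σ²/2)·w′(x) + π(w(x)) + h(x) = γ` with `w(0) = w₀`, with derivative `w'`. -/
def IsSolution (σ : ℝ) (U : Set ℝ) (c h : ℝ → ℝ) (w₀ γ : ℝ) (w w' : ℝ → ℝ) : Prop :=
  w 0 = w₀ ∧ ContinuousOn w' (Set.Ici 0) ∧
  (∀ x ∈ Set.Ici (0:ℝ), HasDerivWithinAt w (w' x) (Set.Ici 0) x) ∧
  (∀ x ∈ Set.Ici (0:ℝ), σ ^ 2 / 2 * w' x + piU U c (w x) + h x = γ)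

lemma piU_abs_bound (U : Set ℝ) (hUne : U.Nonempty) (hUcpt : IsCompact U)
    (c : ℝ → ℝ) (hc : Continuous c) :
    ∃ A B : ℝ, 0 ≤ A ∧ ∀ v : ℝ, |piU U c v| ≤ A * |v| + B := by
  obtain ⟨μ₀, hμ₀⟩ := hUne
  obtain ⟨M, hM⟩ := isBounded_iff_forall_norm_le.mp hUcpt.isBounded
  obtain ⟨μm, hμm, hmin⟩ := hUcpt.exists_isMinOn ⟨μ₀, hμ₀⟩ hc.continuousOn
  have hM0 : 0 ≤ M := le_trans (norm_nonneg μ₀) (hM μ₀ hμ₀)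
  refine ⟨M, |c μ₀| + |c μm|, hM0, fun v => ?_⟩
  have hbdd : ∀ z ∈ (fun μ => μ * v + c μ) '' U, -(M * |v| + (|c μ₀| + |c μm|)) ≤ z := by
    rintro z ⟨μ, hμ, rfl⟩
    simp only
    have h1 : |μ| ≤ M := by simpa using hM μ hμ
    have h2 : c μm ≤ c μ := hmin hμ
    have h3 : -(|μ| * |v|) ≤ μ * v := by
      rw [← abs_mul]; exact neg_abs_le _
    have h4 : -|c μm| ≤ c μm := neg_abs_le _
    nlinarith [abs_nonneg v, abs_nonneg (c μ₀)]
  have hBdd : BddBelow ((fun μ => μ * v + c μ) '' U) := ⟨_, hbdd⟩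
  rw [abs_le]
  constructor
  · exact le_csInf ⟨_, ⟨μ₀, hμ₀, rfl⟩⟩ hbdd
  · have hle : piU U c v ≤ μ₀ * v + c μ₀ := csInf_le hBdd ⟨μ₀, hμ₀, rfl⟩
    have h1 : |μ₀| ≤ M := by simpa using hM μ₀ hμ₀
    have h3 : μ₀ * v ≤ |μ₀| * |v| := by rw [← abs_mul]; exact le_abs_self _
    have h4 : c μ₀ ≤ |c μ₀| := le_abs_self _
    nlinarith [abs_nonneg v, abs_nonneg (c μm)]

lemma core_ascent (x : ℝ) (hx : 0 < x) (f f' : ℝ → ℝ)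
    (hcont : ContinuousOn f (Icc 0 x))
    (hder : ∀ y ∈ Ioo 0 x, HasDerivAt f (f' y) y)
    (L V C K : ℝ) (hK : 0 < K) (hKx : V - L ≤ K * x)
    (h0 : L + 1 ≤ f 0) (hCV : C + 1 ≤ V) (hLV : L + 2 ≤ V)
    (hreg : ∀ y ∈ Icc 0 x, f y ∈ Icc L V → K ≤ f' y) : C < f x := by
  -- barrier: f stays above L
  have hbar : ∀ y ∈ Icc 0 x, L < f y := by
    by_contra hcon
    push_neg at hcon
    obtain ⟨y₁, hy₁, hy₁L⟩ := hcon
    set T : Set ℝ := Icc 0 x ∩ f ⁻¹' (Iic L) with hT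
    have hTcl : IsClosed T := hcont.preimage_isClosed_of_isClosed isClosed_Icc isClosed_Iic
    have hTne : T.Nonempty := ⟨y₁, hy₁, hy₁L⟩
    have hTbdd : BddBelow T := ⟨0, fun z hz => hz.1.1⟩
    set t := sInf T with htdef
    have htT : t ∈ T := hTcl.csInf_mem hTne hTbdd
    have htx : t ∈ Icc 0 x := htT.1
    have hft : f t ≤ L := htT.2
    have ht0 : 0 < t := by
      rcases lt_or_eq_of_le htx.1 with h | h
      · exact h
      · exfalso; rw [← h] at hft; linarith
    set S : Set ℝ := Icc 0 t ∩ f ⁻¹' (Ici (L + 1)) with hS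
    have hScl : IsClosed S :=
      (hcont.mono (Icc_subset_Icc le_rfl htx.2)).preimage_isClosed_of_isClosed
        isClosed_Icc isClosed_Ici
    have hSne : S.Nonempty := ⟨0, ⟨le_rfl, ht0.le⟩, h0⟩
    have hSbdd : BddAbove S := ⟨t, fun z hz => hz.1.2⟩
    set s := sSup S with hsdef
    have hsS : s ∈ S := hScl.csSup_mem hSne hSbdd
    have hfs : L + 1 ≤ f s := hsS.2
    have hst : s < t := by
      rcases lt_or_eq_of_le hsS.1.2 with h | h
      · exact h
      · exfalso; rw [h] at hfs; linarith
    have hmono : StrictMonoOn f (Icc s t) := by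
      apply strictMonoOn_of_deriv_pos (convex_Icc s t)
        (hcont.mono (Icc_subset_Icc hsS.1.1 htx.2))
      intro y hy
      rw [interior_Icc] at hy
      have hy0 : 0 < y := lt_of_le_of_lt hsS.1.1 hy.1
      have hyx : y < x := lt_of_lt_of_le hy.2 htx.2
      have hyIcc : y ∈ Icc 0 x := ⟨hy0.le, hyx.le⟩
      have hfyL : L < f y := by
        by_contra hLe
        push_neg at hLe
        have : y ∈ T := ⟨hyIcc, hLe⟩
        have : t ≤ y := csInf_le hTbdd this
        linarith [hy.2]
      have hfyV : f y ≤ V := by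
        have : y ∉ S := fun hmem => absurd (le_csSup hSbdd hmem) (not_le.mpr hy.1)
        have : ¬ (L + 1 ≤ f y) := fun hge => this ⟨⟨hy0.le, hy.2.le⟩, hge⟩
        push_neg at this
        linarith
      have := hreg y hyIcc ⟨hfyL.le, hfyV⟩
      rw [(hder y ⟨hy0, hyx⟩).deriv]
      linarith
    have := hmono ⟨le_rfl, hst.le⟩ ⟨hst.le, le_rfl⟩ hst
    linarith
  -- main split
  by_cases hcase : ∃ y ∈ Icc 0 x, V ≤ f y
  · obtain ⟨y₀, hy₀, hy₀V⟩ := hcase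
    set T : Set ℝ := Icc 0 x ∩ f ⁻¹' (Ici V) with hT
    have hTcl : IsClosed T := hcont.preimage_isClosed_of_isClosed isClosed_Icc isClosed_Ici
    have hTne : T.Nonempty := ⟨y₀, hy₀, hy₀V⟩
    have hTbdd : BddAbove T := ⟨x, fun z hz => hz.1.2⟩
    set t := sSup T with htdef
    have htT : t ∈ T := hTcl.csSup_mem hTne hTbdd
    have hft : V ≤ f t := htT.2
    rcases lt_or_eq_of_le htT.1.2 with htx | htx
    · have hmono : StrictMonoOn f (Icc t x) := by
        apply strictMonoOn_of_deriv_pos (convex_Icc t x)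
          (hcont.mono (Icc_subset_Icc htT.1.1 le_rfl))
        intro y hy
        rw [interior_Icc] at hy
        have hy0 : 0 < y := lt_of_le_of_lt htT.1.1 hy.1
        have hyIcc : y ∈ Icc 0 x := ⟨hy0.le, hy.2.le⟩
        have hfyV : f y ≤ V := by
          have : y ∉ T := fun hmem => absurd (le_csSup hTbdd hmem) (not_le.mpr hy.1)
          have : ¬ (V ≤ f y) := fun hge => this ⟨hyIcc, hge⟩
          linarith [not_le.mp this]
        have := hreg y hyIcc ⟨(hbar y hyIcc).le, hfyV⟩
        rw [(hder y ⟨hy0, hy.2⟩).deriv]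
        linarith
      have := hmono ⟨le_rfl, htx.le⟩ ⟨htx.le, le_rfl⟩ htx
      linarith
    · rw [htx] at hft; linarith
  · push_neg at hcase
    set g : ℝ → ℝ := fun y => f y - K * y with hg
    have hgmono : MonotoneOn g (Icc 0 x) := by
      apply monotoneOn_of_deriv_nonneg (convex_Icc 0 x)
        (hcont.sub (continuous_const.mul continuous_id).continuousOn)
      · intro y hy
        rw [interior_Icc] at hy
        exact ((hder y hy).sub ((hasDerivAt_id y).const_mul K)).differentiableAt.differentiableWithinAt
      · intro y hy
        rw [interior_Icc] at hy
        have hyIcc : y ∈ Icc 0 x := ⟨hy.1.le, hy.2.le⟩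
        have := hreg y hyIcc ⟨(hbar y hyIcc).le, (hcase y hyIcc).le⟩
        have hd : HasDerivAt (fun z => f z - K * id z) (f' y - K) y := by
          have := (hder y hy).sub ((hasDerivAt_id y).const_mul K); rw [mul_one] at this; exact this
        rw [show (f - (fun _ => K) * id) = (fun z => f z - K * id z) from rfl, hd.deriv]
        linarith
    have := hgmono ⟨le_rfl, hx.le⟩ ⟨hx.le, le_rfl⟩ hx.le
    simp only [hg] at this
    nlinarith

theorem stmt_6 (σ : ℝ) (hσ : 0 < σ) (U : Set ℝ) (hUne : U.Nonempty) (hUcpt : IsCompact U)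
    (c : ℝ → ℝ) (hc : Continuous c) (h : ℝ → ℝ)
    (hhcont : ContinuousOn h (Set.Ici 0)) (hhmono : StrictMonoOn h (Set.Ici 0))
    (hh0 : h 0 = 0) (hhtop : Filter.Tendsto h Filter.atTop Filter.atTop)
    (w₀ x : ℝ) (hx : 0 < x) :
    (∀ C : ℝ, ∃ Γ : ℝ, ∀ γ : ℝ, Γ ≤ γ → ∀ w w' : ℝ → ℝ,
      IsSolution σ U c h w₀ γ w w' → C < w x) ∧
    (∀ C : ℝ, ∃ Γ' : ℝ, ∀ γ : ℝ, γ ≤ Γ' → ∀ w w' : ℝ → ℝ,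
      IsSolution σ U c h w₀ γ w w' → w x < C) := by
  obtain ⟨A, B, hA0, hAB⟩ := piU_abs_bound U hUne hUcpt c hc
  have hσ2 : 0 < σ ^ 2 / 2 := by positivity
  have hhle : ∀ y ∈ Icc (0:ℝ) x, 0 ≤ h y ∧ h y ≤ h x := by
    intro y hy
    exact ⟨by rw [← hh0]; exact (hhmono.monotoneOn) self_mem_Ici hy.1 hy.1,
      (hhmono.monotoneOn) hy.1 hx.le hy.2⟩
  constructor
  · intro C
    refine ⟨σ ^ 2 / 2 * ((max w₀ C + 1 - (min w₀ C - 1)) / x)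
        + (A * max |min w₀ C - 1| |max w₀ C + 1| + B) + h x, fun γ hγ w w' hsol => ?_⟩
    obtain ⟨hw0, hw'cont, hwder, hode⟩ := hsol
    set L : ℝ := min w₀ C - 1 with hLdef
    set V : ℝ := max w₀ C + 1 with hVdef
    set R : ℝ := max |L| |V| with hRdef
    set K : ℝ := (V - L) / x with hKdef
    set P : ℝ := A * R + B with hPdef
    have hVL : L + 2 ≤ V := by
      simp only [hLdef, hVdef]
      have := min_le_max (a := w₀) (b := C)
      linarith
    have hK : 0 < K := by apply div_pos _ hx; linarith
    have hKx : V - L ≤ K * x := by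
      rw [hKdef, div_mul_cancel₀ _ (ne_of_gt hx)]
    have hcontw : ContinuousOn w (Icc 0 x) := fun y hy =>
      ((hwder y hy.1).continuousWithinAt).mono Icc_subset_Ici_self
    have hder : ∀ y ∈ Ioo 0 x, HasDerivAt w (w' y) y := fun y hy =>
      (hwder y hy.1.le).hasDerivAt (Ici_mem_nhds hy.1)
    have hpibound : ∀ y ∈ Icc (0:ℝ) x, w y ∈ Icc L V → |piU U c (w y)| ≤ P := by
      intro y hy hwy
      have h1 : |w y| ≤ R := by
        rw [abs_le]
        refine ⟨?_, ?_⟩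
        · have h2 : -R ≤ -|L| := by simp [hRdef]
          have h3 : -|L| ≤ L := neg_abs_le _
          linarith [hwy.1]
        · have h2 : |V| ≤ R := le_max_right _ _
          linarith [hwy.2, le_abs_self V]
      have := hAB (w y)
      nlinarith
    have hreg : ∀ y ∈ Icc (0:ℝ) x, w y ∈ Icc L V → K ≤ w' y := by
      intro y hy hwy
      have heq := hode y hy.1
      have hπ := (abs_le.mp (hpibound y hy hwy)).2
      have hh := (hhle y hy).2
      nlinarith
    exact core_ascent x hx w w' hcontw hder L V C K hK hKx
      (by rw [hw0]; simp only [hLdef]; linarith [min_le_left w₀ C])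
      (by simp only [hVdef]; linarith [le_max_right w₀ C]) hVL hreg
  · intro C
    refine ⟨-(σ ^ 2 / 2 * ((max w₀ C + 1 - (min w₀ C - 1)) / x)
        + (A * max |min w₀ C - 1| |max w₀ C + 1| + B)), fun γ hγ w w' hsol => ?_⟩
    obtain ⟨hw0, hw'cont, hwder, hode⟩ := hsol
    set L : ℝ := min w₀ C - 1 with hLdef
    set V : ℝ := max w₀ C + 1 with hVdef
    set R : ℝ := max |L| |V| with hRdef
    set K : ℝ := (V - L) / x with hKdef
    set P : ℝ := A * R + B with hPdef
    have hVL : L + 2 ≤ V := by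
      simp only [hLdef, hVdef]
      have := min_le_max (a := w₀) (b := C)
      linarith
    have hK : 0 < K := by apply div_pos _ hx; linarith
    have hKx : V - L ≤ K * x := by
      rw [hKdef, div_mul_cancel₀ _ (ne_of_gt hx)]
    have hcontw : ContinuousOn w (Icc 0 x) := fun y hy =>
      ((hwder y hy.1).continuousWithinAt).mono Icc_subset_Ici_self
    have hder : ∀ y ∈ Ioo 0 x, HasDerivAt w (w' y) y := fun y hy =>
      (hwder y hy.1.le).hasDerivAt (Ici_mem_nhds hy.1)
    have hpibound : ∀ y ∈ Icc (0:ℝ) x, w y ∈ Icc L V → |piU U c (w y)| ≤ P := by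
      intro y hy hwy
      have h1 : |w y| ≤ R := by
        rw [abs_le]
        refine ⟨?_, ?_⟩
        · have h2 : -R ≤ -|L| := by simp [hRdef]
          have h3 : -|L| ≤ L := neg_abs_le _
          linarith [hwy.1]
        · have h2 : |V| ≤ R := le_max_right _ _
          linarith [hwy.2, le_abs_self V]
      have := hAB (w y)
      nlinarith
    have hreg : ∀ y ∈ Icc (0:ℝ) x, (-(w y)) ∈ Icc (-V) (-L) → K ≤ -(w' y) := by
      intro y hy hwy
      have hwy' : w y ∈ Icc L V := ⟨by linarith [hwy.2], by linarith [hwy.1]⟩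
      have heq := hode y hy.1
      have hπ := (abs_le.mp (hpibound y hy hwy')).1
      have hh := (hhle y hy).1
      nlinarith
    have hmain := core_ascent x hx (fun y => -(w y)) (fun y => -(w' y)) hcontw.neg
      (fun y hy => (hder y hy).neg) (-V) (-L) (-C) K hK (by linarith)
      (by simp only [hw0]; simp only [hVdef]; linarith [le_max_left w₀ C])
      (by simp only [hLdef]; linarith [min_le_right w₀ C]) (by linarith) hreg
    simpa using hmain
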